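/- Let Y be a finite set, π' a full-support distribution, R : Y → ℝ, β > 0. The function β ↦ β log(Σ_y π'(y) exp(R(y)/β)) is nonincreasing in β on (0, ∞), with limit max_y R(y) as β → 0⁺ and limit E_{π'}[R] as β → ∞. -/

import Mathlib

open Finset Filter

theorem soft_max_monotone_and_limits
    {Y : Type*} [Fintype Y] [Nonempty Y]
    (π' : Y → ℝ) (hπ' : ∀ y, 0 < π' y) (hπ'1 : ∑ y, π' y = 1)
    (R : Y → ℝ) :
    AntitoneOn (fun β : ℝ => β * Real.log (∑ y, π' y * Real.exp (R y / β)))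
        (Set.Ioi 0) ∧
      Tendsto (fun β : ℝ => β * Real.log (∑ y, π' y * Real.exp (R y / β)))
        (nhdsWithin 0 (Set.Ioi 0))
        (nhds (Finset.univ.sup' Finset.univ_nonempty R)) ∧
      Tendsto (fun β : ℝ => β * Real.log (∑ y, π' y * Real.exp (R y / β)))
        atTop (nhds (∑ y, π' y * R y)) := by
  have Zpos : ∀ β : ℝ, 0 < ∑ y, π' y * Real.exp (R y / β) := fun β =>
    Finset.sum_pos (fun y _ => mul_pos (hπ' y) (Real.exp_pos _)) Finset.univ_nonempty
  refine ⟨?_, ?_, ?_⟩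
  · -- Antitone
    intro a ha b hb hab
    simp only [Set.mem_Ioi] at ha hb
    set p : ℝ := a / b with hp
    have hp0 : 0 < p := div_pos ha hb
    have hp1 : p ≤ 1 := (div_le_one hb).2 hab
    -- Jensen with concavity of x ^ p
    have jensen := (Real.concaveOn_rpow hp0.le hp1).le_map_sum
      (t := Finset.univ) (w := π') (p := fun y => Real.exp (R y / a))
      (fun y _ => (hπ' y).le) hπ'1 (fun y _ => Set.mem_Ici.2 (Real.exp_pos _).le)
    have hkey : (∑ y, π' y * Real.exp (R y / b)) ≤
        (∑ y, π' y * Real.exp (R y / a)) ^ p := by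
      have h1 : ∀ y : Y, Real.exp (R y / a) ^ p = Real.exp (R y / b) := by
        intro y
        rw [← Real.exp_mul]
        congr 1
        field_simp [hp]
        rw [hp, mul_assoc, div_mul_cancel₀ _ hb.ne']
      calc (∑ y, π' y * Real.exp (R y / b))
          = ∑ y, π' y • (Real.exp (R y / a) ^ p) := by
            simp only [smul_eq_mul, h1]
        _ ≤ (∑ y, π' y • Real.exp (R y / a)) ^ p := jensen
        _ = (∑ y, π' y * Real.exp (R y / a)) ^ p := by simp [smul_eq_mul]
    have hlog : Real.log (∑ y, π' y * Real.exp (R y / b)) ≤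
        p * Real.log (∑ y, π' y * Real.exp (R y / a)) := by
      have := Real.log_le_log (Zpos b) hkey
      rwa [Real.log_rpow (Zpos a)] at this
    calc b * Real.log (∑ y, π' y * Real.exp (R y / b))
        ≤ b * (p * Real.log (∑ y, π' y * Real.exp (R y / a))) := by
          exact mul_le_mul_of_nonneg_left hlog hb.le
      _ = a * Real.log (∑ y, π' y * Real.exp (R y / a)) := by
          field_simp [hp]
          rw [hp, mul_comm b, div_mul_cancel₀ _ hb.ne']
  · -- limit at 0⁺ : squeeze between M + β log π'(y₀) and M
    set M : ℝ := Finset.univ.sup' Finset.univ_nonempty R with hM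
    obtain ⟨y₀, -, hy₀⟩ := Finset.exists_mem_eq_sup' Finset.univ_nonempty R
    have hMy : M = R y₀ := hM.trans hy₀
    have hRM : ∀ y, R y ≤ M := fun y =>
      le_of_le_of_eq (Finset.le_sup' R (Finset.mem_univ y)) hM.symm
    have hlow : ∀ β ∈ Set.Ioi (0 : ℝ),
        M + β * Real.log (π' y₀) ≤ β * Real.log (∑ y, π' y * Real.exp (R y / β)) := by
      intro β hβ
      simp only [Set.mem_Ioi] at hβ
      have h1 : π' y₀ * Real.exp (M / β) ≤ ∑ y, π' y * Real.exp (R y / β) := by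
        rw [hMy]
        exact Finset.single_le_sum (f := fun y => π' y * Real.exp (R y / β))
          (fun y _ => (mul_pos (hπ' y) (Real.exp_pos _)).le) (Finset.mem_univ y₀)
      have h2 : Real.log (π' y₀ * Real.exp (M / β)) ≤
          Real.log (∑ y, π' y * Real.exp (R y / β)) :=
        Real.log_le_log (mul_pos (hπ' y₀) (Real.exp_pos _)) h1
      rw [Real.log_mul (hπ' y₀).ne' (Real.exp_pos _).ne', Real.log_exp] at h2
      have := mul_le_mul_of_nonneg_left h2 hβ.le
      calc M + β * Real.log (π' y₀) = β * (Real.log (π' y₀) + M / β) := by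
            field_simp; ring
        _ ≤ β * Real.log (∑ y, π' y * Real.exp (R y / β)) := this
    have hupp : ∀ β ∈ Set.Ioi (0 : ℝ),
        β * Real.log (∑ y, π' y * Real.exp (R y / β)) ≤ M := by
      intro β hβ
      simp only [Set.mem_Ioi] at hβ
      have h1 : (∑ y, π' y * Real.exp (R y / β)) ≤ Real.exp (M / β) := by
        calc (∑ y, π' y * Real.exp (R y / β))
            ≤ ∑ y, π' y * Real.exp (M / β) := by
              refine Finset.sum_le_sum fun y _ => ?_
              refine mul_le_mul_of_nonneg_left ?_ (hπ' y).le
              exact Real.exp_le_exp.2 (div_le_div_of_nonneg_right (hRM y) hβ.le)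
          _ = Real.exp (M / β) := by rw [← Finset.sum_mul, hπ'1, one_mul]
      have h2 := Real.log_le_log (Zpos β) h1
      rw [Real.log_exp] at h2
      have := mul_le_mul_of_nonneg_left h2 hβ.le
      calc β * Real.log (∑ y, π' y * Real.exp (R y / β)) ≤ β * (M / β) := this
        _ = M := by field_simp
    have htends : Tendsto (fun β : ℝ => M + β * Real.log (π' y₀))
        (nhdsWithin 0 (Set.Ioi 0)) (nhds M) := by
      have : Tendsto (fun β : ℝ => M + β * Real.log (π' y₀)) (nhds 0)
          (nhds (M + 0 * Real.log (π' y₀))) := by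
        exact (tendsto_const_nhds.add ((continuous_id.mul continuous_const).tendsto 0))
      simpa using this.mono_left nhdsWithin_le_nhds
    refine tendsto_of_tendsto_of_tendsto_of_le_of_le' htends tendsto_const_nhds ?_ ?_
    · exact eventually_nhdsWithin_of_forall hlow
    · exact eventually_nhdsWithin_of_forall hupp
  · -- limit at ∞ via derivative of log Z at 0
    set g : ℝ → ℝ := fun t => Real.log (∑ y, π' y * Real.exp (R y * t)) with hg
    have hZ : HasDerivAt (fun t : ℝ => ∑ y, π' y * Real.exp (R y * t))
        (∑ y, π' y * R y) 0 := by
      have : ∀ y ∈ Finset.univ, HasDerivAt (fun t : ℝ => π' y * Real.exp (R y * t))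
          (π' y * R y) 0 := by
        intro y _
        have h1 : HasDerivAt (fun t : ℝ => R y * t) (R y) 0 := by
          simpa using (hasDerivAt_id (0 : ℝ)).const_mul (R y)
        have h2 := h1.exp
        simp only [mul_zero, Real.exp_zero, one_mul] at h2
        simpa using h2.const_mul (π' y)
      simpa using HasDerivAt.fun_sum this
    have hZ0 : (∑ y, π' y * Real.exp (R y * (0 : ℝ))) = 1 := by
      simpa using hπ'1
    have hgd : HasDerivAt g (∑ y, π' y * R y) 0 := by
      have := hZ.log (by rw [hZ0]; norm_num)
      simpa [hg, hZ0, hπ'1] using this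
    have hslope := hasDerivAt_iff_tendsto_slope.1 hgd
    have hinv : Tendsto (fun β : ℝ => β⁻¹) atTop (nhdsWithin 0 {(0:ℝ)}ᶜ) :=
      tendsto_inv_atTop_nhdsGT_zero.mono_right
        (nhdsWithin_mono 0 (fun x hx => ne_of_gt hx))
    have hcomp := hslope.comp hinv
    refine hcomp.congr' ?_
    filter_upwards [eventually_gt_atTop (0 : ℝ)] with β hβ
    have hg0 : g 0 = 0 := by simp [hg, hπ'1]
    have : slope g 0 β⁻¹ = β * g β⁻¹ := by
      rw [slope_def_field, hg0]
      field_simp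
      ring
    rw [Function.comp_apply, this]
    simp only [hg, div_eq_mul_inv]
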